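/- Let p ≥ 7 be a prime, q = p^m with 5 ∤ (q^2-1), s ≥ 1, and let C = ⟨(x-1)^{i_1} φ_5(x)^{i_2}⟩ be a cyclic code of length 5p^s over F_q with 0 ≤ i_1, i_2 ≤ p^s. Then the dual code C^⊥ equals ⟨(x-1)^{p^s - i_1} φ_5(x)^{p^s - i_2}⟩, and C^⊥ ⊆ C if and only if 0 ≤ i_1, i_2 ≤ (p^s - 1)/2. -/

import Mathlib

open Polynomial

/-- The cyclic code of length `n` over `F` generated by `g` in `F[x]/(xⁿ-1)`,
viewed as a set of coefficient vectors. -/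
def cyclicCode (F : Type) [Field F] (n : ℕ) (g : F[X]) : Set (Fin n → F) :=
  {c | Ideal.Quotient.mk (Ideal.span {(X : F[X]) ^ n - 1})
        (∑ i : Fin n, C (c i) * X ^ (i : ℕ)) ∈
      Ideal.span {Ideal.Quotient.mk (Ideal.span {(X : F[X]) ^ n - 1}) g}}

/-- The (Euclidean) dual of a code, as a set of vectors. -/
def dualCode {F : Type} [Field F] {n : ℕ} (S : Set (Fin n → F)) : Set (Fin n → F) :=
  {x | ∀ y ∈ S, ∑ i, x i * y i = 0}


section Helpers
variable {F : Type} [Field F]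


noncomputable def Pv {n : ℕ} (c : Fin n → F) : F[X] := ∑ i : Fin n, C (c i) * X ^ (i : ℕ)

lemma coeff_Pv {n : ℕ} (c : Fin n → F) (k : ℕ) :
    (Pv c).coeff k = if h : k < n then c ⟨k, h⟩ else 0 := by
  rw [Pv, finset_sum_coeff]
  simp only [coeff_C_mul, coeff_X_pow, mul_ite, mul_one, mul_zero]
  split
  · next h =>
    rw [Finset.sum_eq_single (⟨k, h⟩ : Fin n)]
    · simp
    · intro b _ hb
      simp only [ite_eq_right_iff]
      intro hk
      exact absurd (Fin.ext hk.symm) hb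
    · simp
  · next h =>
    apply Finset.sum_eq_zero
    intro i _
    simp only [ite_eq_right_iff]
    intro hk
    exact absurd (hk ▸ i.isLt) h

lemma mem_cyclicCode_iff {n : ℕ} {g : F[X]} (hg : g ∣ (X:F[X]) ^ n - 1) (c : Fin n → F) :
    c ∈ cyclicCode F n g ↔ g ∣ Pv c := by
  rw [cyclicCode, Set.mem_setOf_eq, Ideal.mem_span_singleton]
  constructor
  · rintro ⟨a, ha⟩
    obtain ⟨r, rfl⟩ := Ideal.Quotient.mk_surjective a
    rw [← map_mul, Ideal.Quotient.eq, Ideal.mem_span_singleton] at ha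
    obtain ⟨t, ht⟩ := ha
    obtain ⟨w, hw⟩ := hg
    refine ⟨r + w * t, ?_⟩
    have ht' : (∑ i : Fin n, C (c i) * X ^ (i:ℕ)) - g * r = (X ^ n - 1) * t := ht
    show (∑ i : Fin n, C (c i) * X ^ (i:ℕ)) = g * (r + w * t)
    linear_combination ht' + t * hw
  · rintro ⟨a, ha⟩
    exact ⟨Ideal.Quotient.mk _ a, congrArg _ ha⟩

lemma pairing_eq {n : ℕ} (hn : 0 < n) (x y : Fin n → F) :
    ∑ i, x i * y i = ((Pv x) * reflect (n-1) (Pv y)).coeff (n-1) := by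
  have hn1 : (n-1).succ = n := by omega
  rw [coeff_mul, Finset.Nat.sum_antidiagonal_eq_sum_range_succ_mk, hn1]
  have : ∀ i : Fin n, x i * y i
      = (fun k => (Pv x).coeff k * (reflect (n-1) (Pv y)).coeff (n - 1 - k)) (i : ℕ) := by
    intro i
    simp only [coeff_Pv, coeff_reflect, i.isLt, dif_pos]
    rw [revAt_le (by omega : n - 1 - (i:ℕ) ≤ n - 1)]
    have h2 : n - 1 - (n - 1 - (i:ℕ)) = (i : ℕ) := by omega
    rw [h2]
    simp [coeff_Pv, i.isLt]
  rw [Finset.sum_congr rfl (fun i _ => this i),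
    Fin.sum_univ_eq_sum_range (fun k => (Pv x).coeff k * (reflect (n-1) (Pv y)).coeff (n-1-k)) n]

lemma natDegree_reflect_le {N : ℕ} {f : F[X]} (hf : f.natDegree ≤ N) :
    (reflect N f).natDegree ≤ N := by
  rw [natDegree_le_iff_coeff_eq_zero]
  intro k hk
  rw [coeff_reflect, ← revAtFun_eq, revAtFun]
  rw [if_neg (by omega)]
  exact coeff_eq_zero_of_natDegree_lt (by omega)

lemma reflect_pow {k : ℕ} {f : F[X]} (hf : f.natDegree ≤ k) (i : ℕ) :
    reflect (i * k) (f ^ i) = (reflect k f) ^ i := by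
  induction i with
  | zero => simp [reflect_one]
  | succ i ih =>
    have h1 : (i + 1) * k = i * k + k := by ring
    rw [h1, pow_succ, reflect_mul (f^i) f (le_trans natDegree_pow_le (Nat.mul_le_mul_left i hf)) hf, ih, pow_succ]

lemma Pv_coeffs {n : ℕ} (f : F[X]) (hf : f.natDegree < n) :
    Pv (fun i : Fin n => f.coeff i) = f := by
  ext k
  rw [coeff_Pv]
  split
  · rfl
  · next h => exact (coeff_eq_zero_of_natDegree_lt (by omega)).symm

lemma natDegree_Pv_lt {n : ℕ} (hn : 0 < n) (c : Fin n → F) : (Pv c).natDegree < n := by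
  have : (Pv c).natDegree ≤ n - 1 := by
    rw [natDegree_le_iff_coeff_eq_zero]
    intro N hN
    rw [coeff_Pv, dif_neg (by omega)]
  omega

lemma dual_eq {n d : ℕ} {g h : F[X]} (hn : 0 < n) (hg0 : g ≠ 0) (hd : g.natDegree = d)
    (hgh : g * h = X ^ n - 1) (u : F) (hu : u ≠ 0) (hrev : reflect d g = C u * g) :
    dualCode (cyclicCode F n g) = cyclicCode F n h := by
  have hXn : ((X : F[X]) ^ n - 1).natDegree = n := by
    rw [show ((X : F[X]) ^ n - 1) = X ^ n - C 1 by rw [map_one]]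
    exact natDegree_X_pow_sub_C
  have hh0 : h ≠ 0 := by
    rintro rfl
    rw [mul_zero] at hgh
    have := hXn
    rw [← hgh] at this
    simp at this
    omega
  have hgdvd : g ∣ (X : F[X]) ^ n - 1 := ⟨h, hgh.symm⟩
  have hhdvd : h ∣ (X : F[X]) ^ n - 1 := ⟨g, by rw [← hgh]; ring⟩
  have hdn : d + h.natDegree = n := by
    have := natDegree_mul hg0 hh0
    rw [hgh, hXn, hd] at this
    omega
  ext x
  simp only [dualCode, Set.mem_setOf_eq]
  constructor
  · -- dual ⊆ code h
    intro hx
    rw [mem_cyclicCode_iff hhdvd]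
    by_cases he : h.natDegree = 0
    · -- h is a unit
      obtain ⟨a, rfl⟩ := natDegree_eq_zero.mp he
      have ha : a ≠ 0 := fun h' => hh0 (by rw [h', map_zero])
      exact (isUnit_C.mpr (Ne.isUnit ha)).dvd
    · have hdn1 : d ≤ n - 1 := by omega
      -- all middle coefficients of Pv x * g vanish
      have hcoeffs : ∀ k, d ≤ k → k ≤ n - 1 → (Pv x * g).coeff k = 0 := by
        intro k hk1 hk2
        set j := k - d with hj
        have hjd : j ≤ n - 1 - d := by omega
        have hXjg : ((X : F[X]) ^ j * g).natDegree < n := by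
          rw [natDegree_mul (pow_ne_zero _ X_ne_zero) hg0, natDegree_X_pow, hd]
          omega
        have hmem : (fun i : Fin n => ((X : F[X]) ^ j * g).coeff i) ∈ cyclicCode F n g := by
          rw [mem_cyclicCode_iff hgdvd, Pv_coeffs _ hXjg]
          exact Dvd.intro_left _ rfl
        have hzero := hx _ hmem
        rw [pairing_eq hn, Pv_coeffs _ hXjg] at hzero
        have hrefl : reflect (n - 1) ((X : F[X]) ^ j * g) =
            X ^ (n - 1 - d - j) * (C u * g) := by
          rw [show n - 1 = (n - 1 - d) + d by omega,
            reflect_mul (X ^ j) g (by rw [natDegree_X_pow]; omega) (le_of_eq hd),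
            reflect_monomial, revAt_le (by omega : j ≤ n - 1 - d), hrev]
          rw [show n - 1 - d + d - d - j = n - 1 - d - j from by omega]
        rw [hrefl] at hzero
        have : Pv x * (X ^ (n - 1 - d - j) * (C u * g)) =
            C u * ((Pv x * g) * X ^ (n - 1 - d - j)) := by ring
        rw [this, coeff_C_mul, coeff_mul_X_pow'] at hzero
        rw [if_pos (by omega : n - 1 - d - j ≤ n - 1)] at hzero
        have harith : n - 1 - (n - 1 - d - j) = k := by omega
        rw [harith] at hzero
        exact (mul_eq_zero.mp hzero).resolve_left hu
      set t := (Pv x * g) /ₘ (X ^ n) with ht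
      set l := (Pv x * g) %ₘ (X ^ n) with hl
      have hmonicXn : ((X : F[X]) ^ n).Monic := monic_X_pow n
      have hsum : l + X ^ n * t = Pv x * g := modByMonic_add_div _ (X ^ n)
      have hldeg : l.degree < (n : WithBot ℕ) := by
        have := degree_modByMonic_lt (Pv x * g) hmonicXn
        rwa [degree_X_pow] at this
      have hlcoeff : ∀ k, d ≤ k → l.coeff k = 0 := by
        intro k hk
        by_cases hkn : k < n
        · have h1 : l.coeff k = (Pv x * g).coeff k - (X ^ n * t).coeff k := by
            have : l = Pv x * g - X ^ n * t := by linear_combination hsum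
            rw [this, coeff_sub]
          rw [h1, hcoeffs k hk (by omega), mul_comm ((X : F[X]) ^ n) t,
            coeff_mul_X_pow', if_neg (by omega)]
          ring
        · exact coeff_eq_zero_of_degree_lt (lt_of_lt_of_le hldeg (by
            exact_mod_cast Nat.cast_le.mpr (by omega)))
      have hgdeg : g.degree = (d : WithBot ℕ) := by rw [degree_eq_natDegree hg0, hd]
      have hltdeg : (l + t).degree < g.degree := by
        rw [hgdeg]
        apply lt_of_le_of_lt (degree_add_le l t)
        rw [max_lt_iff]
        constructor
        · rw [degree_lt_iff_coeff_zero]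
          intro m hm
          exact hlcoeff m (by exact_mod_cast hm)
        · by_cases htz : t = 0
          · rw [htz, degree_zero]
            exact bot_lt_iff_ne_bot.mpr (by simp)
          · have hnle : ¬ (Pv x * g).degree < ((X : F[X]) ^ n).degree := by
              intro hcon
              exact htz ((divByMonic_eq_zero_iff hmonicXn).mpr hcon)
            have hPg0 : Pv x * g ≠ 0 := by
              intro hcon
              apply hnle
              rw [hcon, degree_zero, degree_X_pow]
              exact bot_lt_iff_ne_bot.mpr (by simp)
            have hnatPg : n ≤ (Pv x * g).natDegree := by
              rw [degree_X_pow, not_lt, degree_eq_natDegree hPg0] at hnle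
              exact_mod_cast hnle
            have hnatPg' : (Pv x * g).natDegree ≤ n - 1 + d := by
              apply le_trans natDegree_mul_le
              have := natDegree_Pv_lt hn x
              omega
            have hnatt : t.natDegree = (Pv x * g).natDegree - n := by
              rw [ht, natDegree_divByMonic _ hmonicXn, natDegree_X_pow]
            have htd : t.natDegree < d := by omega
            rw [degree_eq_natDegree htz]
            exact_mod_cast htd
      have hzlt : l + t = 0 := by
        apply eq_zero_of_dvd_of_degree_lt _ hltdeg
        have h1 : l + t = Pv x * g - (X ^ n - 1) * t := by linear_combination hsum
        rw [h1]
        exact dvd_sub (Dvd.intro_left _ rfl) (by rw [← hgh]; exact ⟨h * t, by ring⟩)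
      refine ⟨t, mul_left_cancel₀ hg0 ?_⟩
      have : Pv x * g = (X ^ n - 1) * t := by linear_combination hzlt - hsum
      rw [← hgh] at this
      linear_combination this
  · -- code h ⊆ dual
    intro hx y hy
    rw [mem_cyclicCode_iff hhdvd] at hx
    rw [mem_cyclicCode_iff hgdvd] at hy
    obtain ⟨a, hxa⟩ := hx
    obtain ⟨b, hyb⟩ := hy
    rw [pairing_eq hn, hxa, hyb]
    by_cases hb : b = 0
    · rw [hb, mul_zero, reflect_zero, mul_zero, coeff_zero]
    by_cases ha : a = 0
    · rw [ha, mul_zero, zero_mul, coeff_zero]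
    have hdegb : d + b.natDegree ≤ n - 1 := by
      have h1 := natDegree_mul hg0 hb
      rw [← hyb] at h1
      have := natDegree_Pv_lt hn y
      omega
    have hdega : h.natDegree + a.natDegree ≤ n - 1 := by
      have h1 := natDegree_mul hh0 ha
      rw [← hxa] at h1
      have := natDegree_Pv_lt hn x
      omega
    have hrefl : reflect (n - 1) (g * b) = (C u * g) * reflect (n - 1 - d) b := by
      rw [show n - 1 = d + (n - 1 - d) by omega,
        reflect_mul g b (le_of_eq hd) (by omega), hrev]
      rw [show d + (n - 1 - d) - d = n - 1 - d from by omega]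
    rw [hrefl]
    set r := reflect (n - 1 - d) b with hr
    have hw : h * a * (C u * g * r) = C u * ((X ^ n - 1) * (a * r)) := by
      rw [← hgh]; ring
    rw [hw, coeff_C_mul]
    have hcoeff : ((X ^ n - 1 : F[X]) * (a * r)).coeff (n - 1) = 0 := by
      have hsplit : ((X ^ n - 1 : F[X]) * (a * r)) = (a * r) * X ^ n - a * r := by ring
      rw [hsplit, coeff_sub, coeff_mul_X_pow', if_neg (by omega)]
      have hwdeg : (a * r).natDegree < n - 1 := by
        apply lt_of_le_of_lt natDegree_mul_le
        have h2 : r.natDegree ≤ n - 1 - d := natDegree_reflect_le (by omega)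
        omega
      rw [coeff_eq_zero_of_natDegree_lt hwdeg]
      ring
    rw [hcoeff]
    ring



noncomputable def phi5 : F[X] := X ^ 4 + X ^ 3 + X ^ 2 + X + 1

lemma monic_phi5 : (phi5 : F[X]).Monic := by unfold phi5; monicity!

lemma natDegree_phi5 : (phi5 : F[X]).natDegree = 4 := by unfold phi5; compute_degree!

lemma monic_X_sub_one : ((X : F[X]) - 1).Monic := by
  simpa using monic_X_sub_C (1 : F)

lemma monic_gen (a b : ℕ) : (((X : F[X]) - 1) ^ a * phi5 ^ b).Monic :=
  (monic_X_sub_one.pow a).mul (monic_phi5.pow b)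

lemma natDegree_gen (a b : ℕ) : (((X : F[X]) - 1) ^ a * phi5 ^ b).natDegree = a + 4 * b := by
  rw [(monic_X_sub_one.pow a).natDegree_mul (monic_phi5.pow b),
    monic_X_sub_one.natDegree_pow, monic_phi5.natDegree_pow, natDegree_phi5]
  have : ((X : F[X]) - 1).natDegree = 1 := by simpa using natDegree_X_sub_C (1 : F)
  rw [this]; ring

lemma reflect_X_sub_one : reflect 1 ((X : F[X]) - 1) = 1 - X := by
  have : (X : F[X]) - 1 = X ^ 1 - C 1 * X ^ 0 := by simp
  rw [this, sub_eq_add_neg, reflect_add, reflect_neg, reflect_C_mul_X_pow, reflect_monomial]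
  simp [revAt_le]
  ring

lemma reflect_phi5 : reflect 4 (phi5 : F[X]) = phi5 := by
  have : (phi5 : F[X]) = X ^ 4 + X ^ 3 + X ^ 2 + X ^ 1 + C 1 * X ^ 0 := by simp [phi5]
  rw [this, reflect_add, reflect_add, reflect_add, reflect_add, reflect_C_mul_X_pow,
    reflect_monomial, reflect_monomial, reflect_monomial, reflect_monomial]
  simp [revAt_le, phi5]
  ring

lemma reflect_gen (a b : ℕ) :
    reflect (a + 4 * b) (((X : F[X]) - 1) ^ a * phi5 ^ b)
      = C ((-1 : F) ^ a) * (((X : F[X]) - 1) ^ a * phi5 ^ b) := by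
  have h1 : a + 4 * b = a * 1 + b * 4 := by ring
  have hX1 : ((X : F[X]) - 1).natDegree ≤ 1 := by
    simpa using le_of_eq (natDegree_X_sub_C (1 : F))
  have hph : (phi5 : F[X]).natDegree ≤ 4 := le_of_eq natDegree_phi5
  rw [h1, reflect_mul (((X : F[X]) - 1) ^ a) (phi5 ^ b)
      (le_trans natDegree_pow_le (Nat.mul_le_mul_left a hX1))
      (le_trans natDegree_pow_le (Nat.mul_le_mul_left b hph)),
    reflect_pow hX1 a, reflect_pow hph b, reflect_X_sub_one, reflect_phi5]
  rw [show (1 - X : F[X]) = -((X : F[X]) - 1) by ring, neg_pow]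
  rw [map_pow, map_neg, map_one]
  ring

end Helpers

theorem stmt_18 (p m q s : ℕ) (hp : p.Prime) (hp7 : 7 ≤ p) (hm : 0 < m) (hq : q = p ^ m)
    (hs : 1 ≤ s) (h5 : ¬ (5 ∣ q ^ 2 - 1))
    (F : Type) [Field F] [Fintype F] [DecidableEq F] (hF : Fintype.card F = q)
    (i₁ i₂ : ℕ) (hi₁ : i₁ ≤ p ^ s) (hi₂ : i₂ ≤ p ^ s) :
    dualCode (cyclicCode F (5 * p ^ s)
        ((X - 1) ^ i₁ * (X ^ 4 + X ^ 3 + X ^ 2 + X + 1) ^ i₂)) =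
      cyclicCode F (5 * p ^ s)
        ((X - 1) ^ (p ^ s - i₁) * (X ^ 4 + X ^ 3 + X ^ 2 + X + 1) ^ (p ^ s - i₂)) ∧
    (dualCode (cyclicCode F (5 * p ^ s)
          ((X - 1) ^ i₁ * (X ^ 4 + X ^ 3 + X ^ 2 + X + 1) ^ i₂)) ⊆
        cyclicCode F (5 * p ^ s)
          ((X - 1) ^ i₁ * (X ^ 4 + X ^ 3 + X ^ 2 + X + 1) ^ i₂) ↔
      i₁ ≤ (p ^ s - 1) / 2 ∧ i₂ ≤ (p ^ s - 1) / 2) := by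
  haveI : Fact p.Prime := ⟨hp⟩
  have hΦ : (X ^ 4 + X ^ 3 + X ^ 2 + X + 1 : F[X]) = phi5 := rfl
  rw [hΦ]
  have hps1 : 0 < p ^ s := pow_pos hp.pos s
  have hn : 0 < 5 * p ^ s := by omega
  have hcast : (p : F) = 0 := by
    have h0 : ((Fintype.card F : ℕ) : F) = 0 := Nat.cast_card_eq_zero F
    rw [hF, hq] at h0
    push_cast at h0
    exact (pow_eq_zero_iff (by omega : m ≠ 0)).mp h0
  haveI : CharP F p := (CharP.charP_iff_prime_eq_zero hp).2 hcast
  haveI : CharP F[X] p := inferInstance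
  have hg0 : ((X - 1 : F[X]) ^ i₁ * phi5 ^ i₂) ≠ 0 := (monic_gen i₁ i₂).ne_zero
  have hdg : ((X - 1 : F[X]) ^ i₁ * phi5 ^ i₂).natDegree = i₁ + 4 * i₂ := natDegree_gen i₁ i₂
  have hgh : ((X - 1 : F[X]) ^ i₁ * phi5 ^ i₂) *
      ((X - 1) ^ (p ^ s - i₁) * phi5 ^ (p ^ s - i₂)) = X ^ (5 * p ^ s) - 1 := by
    have e1 : ((X - 1 : F[X]) ^ i₁ * phi5 ^ i₂) *
        ((X - 1) ^ (p ^ s - i₁) * phi5 ^ (p ^ s - i₂)) = ((X - 1) * phi5 : F[X]) ^ p ^ s := by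
      rw [mul_mul_mul_comm, ← pow_add, ← pow_add,
        show i₁ + (p ^ s - i₁) = p ^ s from by omega,
        show i₂ + (p ^ s - i₂) = p ^ s from by omega, mul_pow]
    have e2 : ((X : F[X]) ^ 5 - 1) ^ p ^ s = ((X : F[X]) ^ 5) ^ p ^ s - 1 ^ p ^ s :=
      sub_pow_char_pow ((X : F[X]) ^ 5) 1 s
    rw [e1, show ((X - 1) * phi5 : F[X]) = X ^ 5 - 1 from by unfold phi5; ring,
      e2, one_pow, ← pow_mul]
  have hu : ((-1 : F) ^ i₁) ≠ 0 := pow_ne_zero _ (neg_ne_zero.mpr one_ne_zero)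
  have part1 := dual_eq hn hg0 hdg hgh ((-1 : F) ^ i₁) hu (reflect_gen i₁ i₂)
  refine ⟨part1, ?_⟩
  rw [part1]
  have hhdvd : (X - 1 : F[X]) ^ (p ^ s - i₁) * phi5 ^ (p ^ s - i₂) ∣ X ^ (5 * p ^ s) - 1 :=
    ⟨(X - 1) ^ i₁ * phi5 ^ i₂, by rw [← hgh]; ring⟩
  have hgdvd : (X - 1 : F[X]) ^ i₁ * phi5 ^ i₂ ∣ X ^ (5 * p ^ s) - 1 :=
    ⟨(X - 1) ^ (p ^ s - i₁) * phi5 ^ (p ^ s - i₂), hgh.symm⟩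
  have hodd : Odd (p ^ s) := Odd.pow (hp.odd_of_ne_two (by omega))
  obtain ⟨k, hk⟩ := hodd
  by_cases hzz : i₁ = 0 ∧ i₂ = 0
  · obtain ⟨rfl, rfl⟩ := hzz
    constructor
    · intro _
      exact ⟨Nat.zero_le _, Nat.zero_le _⟩
    · intro _ c hc
      rw [mem_cyclicCode_iff hgdvd]
      simpa using one_dvd _
  · have hhdeg : ((X - 1 : F[X]) ^ (p ^ s - i₁) * phi5 ^ (p ^ s - i₂)).natDegree
        = (p ^ s - i₁) + 4 * (p ^ s - i₂) := natDegree_gen _ _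
    have hhn : ((X - 1 : F[X]) ^ (p ^ s - i₁) * phi5 ^ (p ^ s - i₂)).natDegree < 5 * p ^ s := by
      rw [hhdeg]
      omega
    have hprime : Prime ((X : F[X]) - 1) := by simpa using prime_X_sub_C (1 : F)
    have h5F : (5 : F) ≠ 0 := by
      intro hcon
      have h5n : ((5 : ℕ) : F) = 0 := by exact_mod_cast hcon
      have hdvd := (CharP.cast_eq_zero_iff F p 5).mp h5n
      have := Nat.le_of_dvd (by norm_num) hdvd
      omega
    have hphi_ne : ¬ ((X : F[X]) - 1) ∣ phi5 := by
      rw [show ((X : F[X]) - 1) = X - C 1 from by rw [map_one], dvd_iff_isRoot]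
      simp only [IsRoot, phi5, eval_add, eval_pow, eval_X, eval_one, one_pow]
      intro hcon
      apply h5F
      linear_combination hcon
    constructor
    · intro hsub
      have hmem : (fun i : Fin (5 * p ^ s) =>
          ((X - 1 : F[X]) ^ (p ^ s - i₁) * phi5 ^ (p ^ s - i₂)).coeff i) ∈
          cyclicCode F (5 * p ^ s) ((X - 1) ^ (p ^ s - i₁) * phi5 ^ (p ^ s - i₂)) := by
        rw [mem_cyclicCode_iff hhdvd, Pv_coeffs _ hhn]
      have hgh' := hsub hmem
      rw [mem_cyclicCode_iff hgdvd, Pv_coeffs _ hhn] at hgh'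
      have h1 : i₁ ≤ p ^ s - i₁ := by
        by_contra hcon
        have hdvd1 : ((X : F[X]) - 1) ^ (p ^ s - i₁ + 1) ∣
            (X - 1) ^ (p ^ s - i₁) * phi5 ^ (p ^ s - i₂) :=
          dvd_trans (dvd_trans (pow_dvd_pow _ (by omega)) (dvd_mul_right _ _)) hgh'
        obtain ⟨w, hw⟩ := hdvd1
        have hcancel : (phi5 : F[X]) ^ (p ^ s - i₂) = (X - 1) * w := by
          apply mul_left_cancel₀ (pow_ne_zero (p ^ s - i₁) (monic_X_sub_one (F := F)).ne_zero)
          linear_combination hw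
        exact hphi_ne (hprime.dvd_of_dvd_pow ⟨w, hcancel⟩)
      have h2 : i₂ ≤ p ^ s - i₂ := by
        by_contra hcon
        have hdvd2 : (phi5 : F[X]) ^ (p ^ s - i₂ + 1) ∣
            (X - 1) ^ (p ^ s - i₁) * phi5 ^ (p ^ s - i₂) :=
          dvd_trans (dvd_trans (pow_dvd_pow _ (by omega)) (dvd_mul_left _ _)) hgh'
        obtain ⟨w, hw⟩ := hdvd2
        have hcancel : ((X : F[X]) - 1) ^ (p ^ s - i₁) = phi5 * w := by
          apply mul_left_cancel₀ (pow_ne_zero (p ^ s - i₂) (monic_phi5 (F := F)).ne_zero)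
          linear_combination hw
        have hcop : IsCoprime ((X : F[X]) - 1) phi5 := (hprime.coprime_iff_not_dvd).mpr hphi_ne
        have hunit : IsUnit (phi5 : F[X]) :=
          (hcop.pow_left).isUnit_of_dvd' ⟨w, hcancel⟩ dvd_rfl
        have hdeg0 := natDegree_eq_zero_of_isUnit hunit
        rw [natDegree_phi5] at hdeg0
        omega
      constructor <;> omega
    · rintro ⟨h1, h2⟩ c hc
      rw [mem_cyclicCode_iff hhdvd] at hc
      rw [mem_cyclicCode_iff hgdvd]
      exact dvd_trans (mul_dvd_mul (pow_dvd_pow _ (by omega)) (pow_dvd_pow _ (by omega))) hc
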